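/- In any quantum 3-coloring of G₁₃, with vertices labelled so that W=(1,1,1), X=(1,−1,1), A=e₁, C=e₃, we have X_i A_j W_i = 0 and X_i C_j W_i = 0 whenever i ≠ j, and X_i W_i = X_i A_i W_i = X_i C_i W_i for all i ∈ {1,2,3}. -/

import Mathlib

open Finset

/-- Representatives of the 13 lines through the origin in ℝ³ spanned by
nonzero `{-1,0,1}`-vectors. -/
def g13vec : Fin 13 → Fin 3 → ℤ :=
  ![![1,0,0], ![0,1,0], ![0,0,1],
    ![1,1,0], ![1,-1,0], ![1,0,1], ![1,0,-1], ![0,1,1], ![0,1,-1],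
    ![1,1,1], ![1,1,-1], ![1,-1,1], ![-1,1,1]]

/-- The orthogonality graph on the 13 lines. -/
def G13 : SimpleGraph (Fin 13) :=
  SimpleGraph.fromRel (fun u v => ∑ i, g13vec u i * g13vec v i = 0)

open Matrix

def IsProjection {n : ℕ} (p : Matrix (Fin n) (Fin n) ℂ) : Prop :=
  p * p = p ∧ pᴴ = p

def IsQuantumColoring {V : Type*} (G : SimpleGraph V) (c n : ℕ)
    (f : V → Fin c → Matrix (Fin n) (Fin n) ℂ) : Prop :=
  (∀ v i, IsProjection (f v i)) ∧
  (∀ v, ∑ i, f v i = 1) ∧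
  (∀ u v, G.Adj u v → ∀ i, f u i * f v i = 0)

section QCAux

open ComplexOrder

variable {n : ℕ}

/-- Two PSD matrices summing to zero are both zero. -/
lemma qc_psd_add_eq_zero {A B : Matrix (Fin n) (Fin n) ℂ}
    (hA : A.PosSemidef) (hB : B.PosSemidef) (h : A + B = 0) : A = 0 := by
  have hv : ∀ x : Fin n → ℂ, A *ᵥ x = 0 := by
    intro x
    rw [← hA.dotProduct_mulVec_zero_iff]
    have h1 := hA.dotProduct_mulVec_nonneg x
    have h2 := hB.dotProduct_mulVec_nonneg x
    have h3 : star x ⬝ᵥ A *ᵥ x + star x ⬝ᵥ B *ᵥ x = 0 := by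
      rw [← dotProduct_add, ← add_mulVec, h, zero_mulVec, dotProduct_zero]
    exact le_antisymm (by rw [eq_neg_of_add_eq_zero_left h3]; exact neg_nonpos.mpr h2) h1
  ext i j
  have := congrFun (hv (Pi.single j 1)) i
  simpa using this

/-- In a resolution of identity by three projections, any two are orthogonal. -/
lemma qc_triple_orth (a b c : Matrix (Fin n) (Fin n) ℂ)
    (pa : IsProjection a) (pb : IsProjection b) (pc : IsProjection c)
    (hsum : a + b + c = 1) : a * b = 0 := by
  have e : b * a * b + b * c * b = b * (a + b + c) * b - b * b * b := by noncomm_ring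
  rw [hsum, mul_one, pb.1, pb.1] at e
  simp only [sub_self] at e
  have hA : b * a * b = (a * b)ᴴ * (a * b) := by
    rw [conjTranspose_mul, pa.2, pb.2]
    calc b * a * b = b * (a * a) * b := by rw [pa.1]
    _ = b * a * (a * b) := by noncomm_ring
  have hB : b * c * b = (c * b)ᴴ * (c * b) := by
    rw [conjTranspose_mul, pc.2, pb.2]
    calc b * c * b = b * (c * c) * b := by rw [pc.1]
    _ = b * c * (c * b) := by noncomm_ring
  have h0 : (a * b)ᴴ * (a * b) = 0 := by
    apply qc_psd_add_eq_zero (posSemidef_conjTranspose_mul_self _)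
      (posSemidef_conjTranspose_mul_self (c * b))
    rw [← hA, ← hB, e]
  exact conjTranspose_mul_self_eq_zero.mp h0

lemma qc_third {i j : Fin 3} (hij : i ≠ j) : ∃ k, i ≠ k ∧ j ≠ k := by
  revert hij
  revert i j
  decide

lemma qc_sum3 {α : Type*} [AddCommMonoid α] (p : Fin 3 → α) {i j k : Fin 3}
    (hij : i ≠ j) (hik : i ≠ k) (hjk : j ≠ k) : p i + p j + p k = ∑ t, p t := by
  fin_cases i <;> fin_cases j <;> fin_cases k <;> simp_all [Fin.sum_univ_three] <;> abel

/-- The projections attached to one vertex are pairwise orthogonal. -/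
lemma qc_pvm_orth {p : Fin 3 → Matrix (Fin n) (Fin n) ℂ}
    (hproj : ∀ i, IsProjection (p i)) (hsum : ∑ i, p i = 1)
    {i j : Fin 3} (hij : i ≠ j) : p i * p j = 0 := by
  obtain ⟨k, hik, hjk⟩ := qc_third hij
  exact qc_triple_orth (p i) (p j) (p k) (hproj i) (hproj j) (hproj k)
    ((qc_sum3 p hij hik hjk).trans hsum)

/-- Middle-cancellation: `pᵢ qⱼ pₖ = 0` for suitable orthogonality data. -/
lemma qc_mid0 (pi qi qj qk pk : Matrix (Fin n) (Fin n) ℂ)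
    (h1 : qi + qj + qk = 1) (h2 : pi * qi = 0) (h3 : qk * pk = 0)
    (h4 : pi * pk = 0) : pi * qj * pk = 0 := by
  have e : pi * qj * pk
      = pi * (qi + qj + qk) * pk - (pi * qi) * pk - pi * (qk * pk) := by noncomm_ring
  rw [h1, h2, h3, mul_one, h4, zero_mul, mul_zero, sub_zero, sub_zero] at e
  exact e

/-- Commutation across an edge (pure matrix form). -/
lemma qc_comm0 (pa pb pc qa qb qc : Matrix (Fin n) (Fin n) ℂ)
    (hp : pa + pb + pc = 1) (hq : qa + qb + qc = 1)
    (hpaqa : pa * qa = 0) (hqcpc : qc * pc = 0) (hpapc : pa * pc = 0)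
    (hpcqc : pc * qc = 0) (hqapa : qa * pa = 0) (hpcpa : pc * pa = 0)
    (hpbqb : pb * qb = 0) (hqbpb : qb * pb = 0) :
    pa * qb = qb * pa := by
  have m1 : pa * qb * pc = 0 := qc_mid0 pa qa qb qc pc hq hpaqa hqcpc hpapc
  have m2 : pc * qb * pa = 0 :=
    qc_mid0 pc qc qb qa pa (by rw [← hq]; abel) hpcqc hqapa hpcpa
  have e1 : pa * qb = pa * qb * pa := by
    have e : pa * qb * (pa + pb + pc)
        = pa * qb * pa + pa * (qb * pb) + pa * qb * pc := by noncomm_ring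
    rw [hp, mul_one, hqbpb, mul_zero, add_zero, m1, add_zero] at e
    exact e
  have e2 : qb * pa = pa * qb * pa := by
    have e : (pa + pb + pc) * (qb * pa)
        = pa * qb * pa + (pb * qb) * pa + pc * qb * pa := by noncomm_ring
    rw [hp, one_mul, hpbqb, zero_mul, add_zero, m2, add_zero] at e
    exact e
  rw [e1, e2]

/-- The chain computation `xᵢ aⱼ wᵢ = 0` (pure matrix form). -/
lemma qc_chain0 (xi aj wi li lj lk mi mj mk : Matrix (Fin n) (Fin n) ℂ)
    (hL : li + lj + lk = 1) (hM : mi + mj + mk = 1)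
    (hxl : xi * li = 0) (hla : lj * aj = 0)
    (hmw : mi * wi = 0) (ham : aj * mj = 0)
    (hcomm : aj * mk = mk * aj) (hlm : lk * mk = 0) :
    xi * aj * wi = 0 := by
  have e1 : xi * aj * wi = xi * lk * aj * wi := by
    have e : xi * ((li + lj + lk) * aj) * wi
        = (xi * li) * aj * wi + xi * (lj * aj) * wi + xi * lk * aj * wi := by noncomm_ring
    rw [hL, one_mul, hxl, hla, zero_mul, zero_mul, mul_zero, zero_mul, zero_add,
      zero_add] at e
    exact e
  have e2 : xi * lk * aj * wi = xi * lk * (aj * mk) * wi := by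
    have e : xi * lk * (aj * (mi + mj + mk)) * wi
        = xi * lk * aj * (mi * wi) + xi * lk * (aj * mj) * wi
          + xi * lk * (aj * mk) * wi := by noncomm_ring
    rw [hM, mul_one, hmw, ham, mul_zero, mul_zero, zero_mul, zero_add, zero_add] at e
    exact e
  have e3 : xi * lk * (mk * aj) * wi = 0 := by
    have e : xi * lk * (mk * aj) * wi = xi * ((lk * mk) * (aj * wi)) := by noncomm_ring
    rw [hlm, zero_mul, mul_zero] at e
    exact e
  rw [e1, e2, hcomm, e3]

/-- Projections on adjacent vertices of a quantum coloring commute. -/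
lemma qc_comm {V : Type*} {G : SimpleGraph V} {f : V → Fin 3 → Matrix (Fin n) (Fin n) ℂ}
    (hf : IsQuantumColoring G 3 n f) {u v : V} (huv : G.Adj u v) (a b : Fin 3) :
    f u a * f v b = f v b * f u a := by
  obtain ⟨hproj, hsum, hadj⟩ := hf
  have hvu : ∀ i, f v i * f u i = 0 := hadj v u huv.symm
  have hpp : ∀ {i j : Fin 3}, i ≠ j → f u i * f u j = 0 :=
    fun h => qc_pvm_orth (hproj u) (hsum u) h
  rcases eq_or_ne a b with rfl | hab
  · rw [hadj u v huv a, hvu a]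
  · obtain ⟨k, hak, hbk⟩ := qc_third hab
    exact qc_comm0 (f u a) (f u b) (f u k) (f v a) (f v b) (f v k)
      ((qc_sum3 (f u) hab hak hbk).trans (hsum u))
      ((qc_sum3 (f v) hab hak hbk).trans (hsum v))
      (hadj u v huv a) (hvu k) (hpp hak) (hadj u v huv k) (hvu a) (hpp hak.symm)
      (hadj u v huv b) (hvu b)

/-- The chain lemma: if `x ∼ l ∼ a ∼ m ∼ w` with `l ∼ m`, then
`xᵢ aⱼ wᵢ = 0` for `i ≠ j`. -/
lemma qc_chain {V : Type*} {G : SimpleGraph V} {f : V → Fin 3 → Matrix (Fin n) (Fin n) ℂ}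
    (hf : IsQuantumColoring G 3 n f) {x l a m w : V}
    (hxl : G.Adj x l) (hla : G.Adj l a) (ham : G.Adj a m) (hmw : G.Adj m w)
    (hlm : G.Adj l m) {i j : Fin 3} (hij : i ≠ j) :
    f x i * f a j * f w i = 0 := by
  obtain ⟨hproj, hsum, hadj⟩ := hf
  obtain ⟨k, hik, hjk⟩ := qc_third hij
  exact qc_chain0 (f x i) (f a j) (f w i) (f l i) (f l j) (f l k)
    (f m i) (f m j) (f m k)
    ((qc_sum3 (f l) hij hik hjk).trans (hsum l))
    ((qc_sum3 (f m) hij hik hjk).trans (hsum m))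
    (hadj x l hxl i) (hadj l a hla j)
    (hadj m w hmw i) (hadj a m ham j)
    (qc_comm ⟨hproj, hsum, hadj⟩ ham j k) (hadj l m hlm k)

lemma qc_adj (u v : Fin 13) (h : u ≠ v)
    (h2 : ∑ i, g13vec u i * g13vec v i = 0) : G13.Adj u v := by
  rw [G13, SimpleGraph.fromRel_adj]
  exact ⟨h, Or.inl h2⟩

end QCAux

/-- In `g13vec`, vertex `0` is `A = e₁`, vertex `2` is `C = e₃`,
vertex `9` is `W = (1,1,1)` and vertex `11` is `X = (1,-1,1)`. -/
theorem G13_quantum_three_coloring_XW_relations {n : ℕ}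
    (f : Fin 13 → Fin 3 → Matrix (Fin n) (Fin n) ℂ)
    (hf : IsQuantumColoring G13 3 n f) :
    (∀ i j : Fin 3, i ≠ j → f 11 i * f 0 j * f 9 i = 0) ∧
    (∀ i j : Fin 3, i ≠ j → f 11 i * f 2 j * f 9 i = 0) ∧
    (∀ i : Fin 3, f 11 i * f 9 i = f 11 i * f 0 i * f 9 i) ∧
    (∀ i : Fin 3, f 11 i * f 9 i = f 11 i * f 2 i * f 9 i) := by
  have adj_11_7 : G13.Adj 11 7 := qc_adj _ _ (by decide) (by decide)
  have adj_7_0 : G13.Adj 7 0 := qc_adj _ _ (by decide) (by decide)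
  have adj_0_8 : G13.Adj 0 8 := qc_adj _ _ (by decide) (by decide)
  have adj_8_9 : G13.Adj 8 9 := qc_adj _ _ (by decide) (by decide)
  have adj_7_8 : G13.Adj 7 8 := qc_adj _ _ (by decide) (by decide)
  have adj_11_3 : G13.Adj 11 3 := qc_adj _ _ (by decide) (by decide)
  have adj_3_2 : G13.Adj 3 2 := qc_adj _ _ (by decide) (by decide)
  have adj_2_4 : G13.Adj 2 4 := qc_adj _ _ (by decide) (by decide)
  have adj_4_9 : G13.Adj 4 9 := qc_adj _ _ (by decide) (by decide)
  have adj_3_4 : G13.Adj 3 4 := qc_adj _ _ (by decide) (by decide)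
  have hA : ∀ i j : Fin 3, i ≠ j → f 11 i * f 0 j * f 9 i = 0 := fun i j hij =>
    qc_chain hf adj_11_7 adj_7_0 adj_0_8 adj_8_9 adj_7_8 hij
  have hC : ∀ i j : Fin 3, i ≠ j → f 11 i * f 2 j * f 9 i = 0 := fun i j hij =>
    qc_chain hf adj_11_3 adj_3_2 adj_2_4 adj_4_9 adj_3_4 hij
  refine ⟨hA, hC, ?_, ?_⟩
  · intro i
    have hsum : ∀ v : Fin 13, f v 0 + f v 1 + f v 2 = 1 := fun v =>
      (Fin.sum_univ_three _).symm.trans (hf.2.1 v)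
    have e : f 11 i * f 9 i
        = f 11 i * (f 0 0 + f 0 1 + f 0 2) * f 9 i := by rw [hsum 0, mul_one]
    have e2 : f 11 i * (f 0 0 + f 0 1 + f 0 2) * f 9 i
        = f 11 i * f 0 0 * f 9 i + f 11 i * f 0 1 * f 9 i
          + f 11 i * f 0 2 * f 9 i := by noncomm_ring
    rw [e, e2]
    fin_cases i <;>
      simp [hA 0 1 (by decide), hA 0 2 (by decide), hA 1 0 (by decide),
        hA 1 2 (by decide), hA 2 0 (by decide), hA 2 1 (by decide)]
  · intro i
    have hsum : ∀ v : Fin 13, f v 0 + f v 1 + f v 2 = 1 := fun v =>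
      (Fin.sum_univ_three _).symm.trans (hf.2.1 v)
    have e : f 11 i * f 9 i
        = f 11 i * (f 2 0 + f 2 1 + f 2 2) * f 9 i := by rw [hsum 2, mul_one]
    have e2 : f 11 i * (f 2 0 + f 2 1 + f 2 2) * f 9 i
        = f 11 i * f 2 0 * f 9 i + f 11 i * f 2 1 * f 9 i
          + f 11 i * f 2 2 * f 9 i := by noncomm_ring
    rw [e, e2]
    fin_cases i <;>
      simp [hC 0 1 (by decide), hC 0 2 (by decide), hC 1 0 (by decide),
        hC 1 2 (by decide), hC 2 0 (by decide), hC 2 1 (by decide)]
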